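/- arXiv:1305.1756 — 8 statements merged into one kernel-verified Lean document; each statement's English description precedes it below -/
import Mathlib

section
/- Let A ∈ ℂ^{n×n}, B ∈ ℂ^{n×m}, C ∈ ℂ^{p×n} with m = p. If the pair (A,C) is not observable, then there exists λ ∈ spectrum(A) such that for every D ∈ ℂ^{p×p}, λ is an eigenvalue of the square block matrix [[A,B],[C,D]]. -/
open Matrix

/-- PBH controllability: `rank [λI − A, B] = n` for all `λ ∈ ℂ`. -/
def Controllable {n m : Type*} [Fintype n] [Fintype m] [DecidableEq n]
    (A : Matrix n n ℂ) (B : Matrix n m ℂ) : Prop :=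
  ∀ lam : ℂ, (Matrix.fromCols (lam • (1 : Matrix n n ℂ) - A) B).rank = Fintype.card n

/-- PBH observability: `rank [λI − A; C] = n` for all `λ ∈ ℂ`. -/
def Observable {n p : Type*} [Fintype n] [Fintype p] [DecidableEq n]
    (A : Matrix n n ℂ) (C : Matrix p n ℂ) : Prop :=
  ∀ lam : ℂ, (Matrix.fromRows (lam • (1 : Matrix n n ℂ) - A) C).rank = Fintype.card n

lemma mem_spectrum_of_vec {k : Type*} [Fintype k] [DecidableEq k]
    (M : Matrix k k ℂ) (lam : ℂ) (v : k → ℂ) (hv : v ≠ 0)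
    (hMv : (lam • (1 : Matrix k k ℂ) - M) *ᵥ v = 0) : lam ∈ spectrum ℂ M := by
  rw [spectrum.mem_iff, Algebra.algebraMap_eq_smul_one]
  intro hunit
  have hdet : (lam • (1 : Matrix k k ℂ) - M).det = 0 :=
    (Matrix.exists_mulVec_eq_zero_iff).mp ⟨v, hv, hMv⟩
  rw [Matrix.isUnit_iff_isUnit_det, hdet] at hunit
  exact hunit.ne_zero rfl

theorem not_observable_spectrum_intersect (n p : ℕ)
    (A : Matrix (Fin n) (Fin n) ℂ) (B : Matrix (Fin n) (Fin p) ℂ)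
    (C : Matrix (Fin p) (Fin n) ℂ)
    (h : ¬ Observable A C) :
    ∃ lam ∈ spectrum ℂ A, ∀ D : Matrix (Fin p) (Fin p) ℂ,
      lam ∈ spectrum ℂ (Matrix.fromBlocks A B C D) := by
  rw [Observable, not_forall] at h
  obtain ⟨lam, hlam⟩ := h
  set M := Matrix.fromRows (lam • (1 : Matrix (Fin n) (Fin n) ℂ) - A) C with hM
  -- rank-nullity: kernel of mulVecLin nontrivial
  have hrn := LinearMap.finrank_range_add_finrank_ker M.mulVecLin
  rw [Matrix.rank] at hlam
  have hker : LinearMap.ker M.mulVecLin ≠ ⊥ := by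
    intro hbot
    apply hlam
    rw [hbot, finrank_bot, add_zero] at hrn
    simpa using hrn
  obtain ⟨v, hvmem, hv⟩ := Submodule.exists_mem_ne_zero_of_ne_bot hker
  have hMv : M *ᵥ v = 0 := hvmem
  rw [hM, Matrix.fromRows_mulVec] at hMv
  have h1 : (lam • (1 : Matrix (Fin n) (Fin n) ℂ) - A) *ᵥ v = 0 := by
    funext i; exact congrFun hMv (Sum.inl i)
  have h2 : C *ᵥ v = 0 := by
    funext i; exact congrFun hMv (Sum.inr i)
  refine ⟨lam, mem_spectrum_of_vec A lam v hv h1, fun D => ?_⟩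
  refine mem_spectrum_of_vec _ lam (Sum.elim v 0) ?_ ?_
  · intro hz
    apply hv
    funext i
    exact congrFun hz (Sum.inl i)
  · have : lam • (1 : Matrix (Fin n ⊕ Fin p) (Fin n ⊕ Fin p) ℂ) - Matrix.fromBlocks A B C D
        = Matrix.fromBlocks (lam • 1 - A) (-B) (-C) (lam • 1 - D) := by
      rw [← Matrix.fromBlocks_one, Matrix.fromBlocks_smul]
      ext (i|i) (j|j) <;> simp [Matrix.fromBlocks]
    rw [this, Matrix.fromBlocks_mulVec]
    simp [Sum.elim_comp_inl, Sum.elim_comp_inr, Matrix.neg_mulVec, h1, h2]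
end

section
/- Let A ∈ ℂ^{n×n}, B ∈ ℂ^{n×m}, C ∈ ℂ^{p×n} with m = p. If for every eigenvalue λ_j of A there exists D_j ∈ ℂ^{p×p} such that λ_j is not an eigenvalue of the block matrix [[A,B],[C,D_j]], then the pair (A,B) is controllable and the pair (A,C) is observable. -/
open Matrix

lemma aux_smul_one_sub_fromBlocks {n p : ℕ} (lam : ℂ)
    (A : Matrix (Fin n) (Fin n) ℂ) (B : Matrix (Fin n) (Fin p) ℂ)
    (C : Matrix (Fin p) (Fin n) ℂ) (D : Matrix (Fin p) (Fin p) ℂ) :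
    lam • (1 : Matrix (Fin n ⊕ Fin p) (Fin n ⊕ Fin p) ℂ) - Matrix.fromBlocks A B C D
      = Matrix.fromBlocks (lam • 1 - A) (-B) (-C) (lam • 1 - D) := by
  rw [← Matrix.fromBlocks_one, Matrix.fromBlocks_smul]
  ext (i | i) (j | j) <;> simp

lemma aux_rank_of_surj {n : ℕ} {m : Type*} [Fintype m]
    (M : Matrix (Fin n) m ℂ) (hs : Function.Surjective M.mulVecLin) :
    M.rank = Fintype.card (Fin n) := by
  rw [Matrix.rank, LinearMap.range_eq_top.mpr hs, finrank_top,
    Module.finrank_fintype_fun_eq_card]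

lemma aux_rank_of_inj {n : ℕ} {m : Type*} [Fintype m]
    (M : Matrix m (Fin n) ℂ) (hi : Function.Injective M.mulVecLin) :
    M.rank = Fintype.card (Fin n) := by
  rw [Matrix.rank, LinearMap.finrank_range_of_inj hi,
    Module.finrank_fintype_fun_eq_card]

theorem minimal_of_spectrum_avoidance (n p : ℕ)
    (A : Matrix (Fin n) (Fin n) ℂ) (B : Matrix (Fin n) (Fin p) ℂ)
    (C : Matrix (Fin p) (Fin n) ℂ)
    (h : ∀ lam ∈ spectrum ℂ A, ∃ D : Matrix (Fin p) (Fin p) ℂ,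
      lam ∉ spectrum ℂ (Matrix.fromBlocks A B C D)) :
    Controllable A B ∧ Observable A C := by
  constructor
  · intro lam
    apply aux_rank_of_surj
    by_cases hlam : lam ∈ spectrum ℂ A
    · obtain ⟨D, hD⟩ := h lam hlam
      rw [spectrum.notMem_iff, Algebra.algebraMap_eq_smul_one,
        aux_smul_one_sub_fromBlocks] at hD
      intro w
      obtain ⟨u, hu⟩ := (Matrix.mulVec_surjective_iff_isUnit.mpr hD) (Sum.elim w 0)
      rw [← Sum.elim_comp_inl_inr u, Matrix.fromBlocks_mulVec] at hu
      have h1 : (lam • 1 - A) *ᵥ (u ∘ Sum.inl) + (-B) *ᵥ (u ∘ Sum.inr) = w := by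
        funext i; exact congrFun hu (Sum.inl i)
      refine ⟨Sum.elim (u ∘ Sum.inl) (-(u ∘ Sum.inr)), ?_⟩
      rw [Matrix.mulVecLin_apply, Matrix.fromCols_mulVec_sumElim, ← h1]
      simp [Matrix.neg_mulVec, Matrix.mulVec_neg]
    · rw [spectrum.notMem_iff, Algebra.algebraMap_eq_smul_one] at hlam
      intro w
      obtain ⟨u, hu⟩ := (Matrix.mulVec_surjective_iff_isUnit.mpr hlam) w
      refine ⟨Sum.elim u 0, ?_⟩
      rw [Matrix.mulVecLin_apply, Matrix.fromCols_mulVec_sumElim, hu]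
      simp
  · intro lam
    apply aux_rank_of_inj
    rw [injective_iff_map_eq_zero]
    by_cases hlam : lam ∈ spectrum ℂ A
    · obtain ⟨D, hD⟩ := h lam hlam
      rw [spectrum.notMem_iff, Algebra.algebraMap_eq_smul_one,
        aux_smul_one_sub_fromBlocks] at hD
      intro v hv
      rw [Matrix.mulVecLin_apply, Matrix.fromRows_mulVec] at hv
      have h1 : (lam • 1 - A) *ᵥ v = 0 := by
        funext i; exact congrFun hv (Sum.inl i)
      have h2 : C *ᵥ v = 0 := by
        funext i; exact congrFun hv (Sum.inr i)
      have h3 : Matrix.fromBlocks (lam • 1 - A) (-B) (-C) (lam • 1 - D) *ᵥ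
          Sum.elim v 0 = 0 := by
        rw [Matrix.fromBlocks_mulVec]
        simp [h1, Matrix.neg_mulVec, h2]
      have h4 := Matrix.mulVec_injective_iff_isUnit.mpr hD
        (h3.trans (Matrix.mulVec_zero _).symm)
      funext i; exact congrFun h4 (Sum.inl i)
    · rw [spectrum.notMem_iff, Algebra.algebraMap_eq_smul_one] at hlam
      intro v hv
      rw [Matrix.mulVecLin_apply, Matrix.fromRows_mulVec] at hv
      have h1 : (lam • 1 - A) *ᵥ v = 0 := by
        funext i; exact congrFun hv (Sum.inl i)
      exact Matrix.mulVec_injective_iff_isUnit.mpr hlam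
        (h1.trans (Matrix.mulVec_zero _).symm)
end

section
/- Let A ∈ ℂ^{n×n}, B ∈ ℂ^{n×m}, C ∈ ℂ^{p×n}, and suppose (A,B) is controllable and (A,C) is observable. Then there exists K ∈ ℂ^{m×p} such that spectrum(A) ∩ spectrum(A + BKC) = ∅. -/
open Matrix

section Aux

variable {n m p : ℕ}

lemma sofAux_vecMulVec_mulVec (u : Fin n → ℂ) (c : Fin p → ℂ) (y : Fin p → ℂ) :
    vecMulVec u c *ᵥ y = (c ⬝ᵥ y) • u := by
  funext i
  simp only [mulVec, dotProduct, vecMulVec_apply, Pi.smul_apply, smul_eq_mul]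
  rw [Finset.sum_mul]
  exact Finset.sum_congr rfl fun j _ => by ring

lemma sofAux_range_sup (M : Matrix (Fin n) (Fin n) ℂ) (B : Matrix (Fin n) (Fin m) ℂ)
    (h : (Matrix.fromCols M B).rank = n) :
    LinearMap.range M.mulVecLin ⊔ LinearMap.range B.mulVecLin = ⊤ := by
  have hr : LinearMap.range (Matrix.fromCols M B).mulVecLin
      = LinearMap.range M.mulVecLin ⊔ LinearMap.range B.mulVecLin := by
    apply le_antisymm
    · rintro y ⟨x, rfl⟩
      have hx : x = Sum.elim (x ∘ Sum.inl) (x ∘ Sum.inr) := by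
        funext z; cases z <;> rfl
      rw [mulVecLin_apply, hx, fromCols_mulVec_sumElim]
      exact Submodule.add_mem _
        (Submodule.mem_sup_left ⟨x ∘ Sum.inl, rfl⟩)
        (Submodule.mem_sup_right ⟨x ∘ Sum.inr, rfl⟩)
    · apply sup_le
      · rintro y ⟨x, rfl⟩
        refine ⟨Sum.elim x 0, ?_⟩
        rw [mulVecLin_apply, fromCols_mulVec_sumElim]
        simp
      · rintro y ⟨x, rfl⟩
        refine ⟨Sum.elim 0 x, ?_⟩
        rw [mulVecLin_apply, fromCols_mulVec_sumElim]
        simp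
  have hfin : Module.finrank ℂ
      (LinearMap.range M.mulVecLin ⊔ LinearMap.range B.mulVecLin : Submodule ℂ (Fin n → ℂ)) = n := by
    rw [← hr]
    simpa [Matrix.rank] using h
  apply Submodule.eq_top_of_finrank_eq
  rw [hfin, Module.finrank_fin_fun]

lemma sofAux_ker_inf (M : Matrix (Fin n) (Fin n) ℂ) (C : Matrix (Fin p) (Fin n) ℂ)
    (h : (Matrix.fromRows M C).rank = n) :
    LinearMap.ker M.mulVecLin ⊓ LinearMap.ker C.mulVecLin = ⊥ := by
  have hker : LinearMap.ker (Matrix.fromRows M C).mulVecLin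
      = LinearMap.ker M.mulVecLin ⊓ LinearMap.ker C.mulVecLin := by
    ext x
    simp only [LinearMap.mem_ker, Submodule.mem_inf, mulVecLin_apply, fromRows_mulVec]
    constructor
    · intro hx
      constructor
      · funext i; exact congrFun hx (Sum.inl i)
      · funext i; exact congrFun hx (Sum.inr i)
    · rintro ⟨h1, h2⟩
      funext z; cases z with
      | inl i => exact congrFun h1 i
      | inr i => exact congrFun h2 i
  have h0 : Module.finrank ℂ (LinearMap.ker (Matrix.fromRows M C).mulVecLin) = 0 := by
    have := LinearMap.finrank_range_add_finrank_ker (Matrix.fromRows M C).mulVecLin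
    have hrank : Module.finrank ℂ (LinearMap.range (Matrix.fromRows M C).mulVecLin) = n := by
      simpa [Matrix.rank] using h
    have hdom : Module.finrank ℂ (Fin n → ℂ) = n := Module.finrank_fin_fun ℂ
    omega
  rw [← hker]
  exact Submodule.finrank_eq_zero.mp h0

lemma sofAux_main (B : Matrix (Fin n) (Fin m) ℂ) (C : Matrix (Fin p) (Fin n) ℂ) :
    ∀ (k : ℕ) (M : Matrix (Fin n) (Fin n) ℂ),
      LinearMap.range M.mulVecLin ⊔ LinearMap.range B.mulVecLin = ⊤ →
      LinearMap.ker M.mulVecLin ⊓ LinearMap.ker C.mulVecLin = ⊥ →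
      Module.finrank ℂ (LinearMap.ker M.mulVecLin) ≤ k →
      ∃ K : Matrix (Fin m) (Fin p) ℂ, LinearMap.ker (M + B * K * C).mulVecLin = ⊥ := by
  intro k
  induction k with
  | zero =>
    intro M _ _ hk
    refine ⟨0, ?_⟩
    have : LinearMap.ker M.mulVecLin = ⊥ :=
      Submodule.finrank_eq_zero.mp (Nat.le_zero.mp hk)
    simpa using this
  | succ k ih =>
    intro M hcols hrows hk
    by_cases hker : LinearMap.ker M.mulVecLin = ⊥
    · exact ⟨0, by simpa using hker⟩
    · obtain ⟨v, hvmem, hv0⟩ := Submodule.exists_mem_ne_zero_of_ne_bot hker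
      have hvker : M *ᵥ v = 0 := hvmem
      -- C *ᵥ v ≠ 0
      have hCv : C *ᵥ v ≠ 0 := by
        intro hCv
        apply hv0
        have : v ∈ LinearMap.ker M.mulVecLin ⊓ LinearMap.ker C.mulVecLin :=
          ⟨hvmem, hCv⟩
        rw [hrows] at this
        exact this
      obtain ⟨j, hj⟩ := Function.ne_iff.mp hCv
      simp only [Pi.zero_apply] at hj
      -- find u with B *ᵥ u ∉ range M
      have hex : ∃ u : Fin m → ℂ, B *ᵥ u ∉ LinearMap.range M.mulVecLin := by
        by_contra hno
        push_neg at hno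
        have hle : LinearMap.range B.mulVecLin ≤ LinearMap.range M.mulVecLin := by
          rintro y ⟨x, rfl⟩
          exact hno x
        have htop : LinearMap.range M.mulVecLin = ⊤ := by
          rw [← hcols]
          exact (sup_eq_left.mpr hle).symm
        have hsurj : Function.Surjective M.mulVecLin :=
          LinearMap.range_eq_top.mp htop
        have hinj : Function.Injective M.mulVecLin :=
          (LinearMap.injective_iff_surjective).mpr hsurj
        exact hker (LinearMap.ker_eq_bot.mpr hinj)
      obtain ⟨u, hu⟩ := hex
      set b : Fin n → ℂ := B *ᵥ u with hb
      set c : Fin p → ℂ := Pi.single j ((C *ᵥ v) j)⁻¹ with hc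
      set K₀ : Matrix (Fin m) (Fin p) ℂ := vecMulVec u c with hK₀
      set M' : Matrix (Fin n) (Fin n) ℂ := M + B * K₀ * C with hM'
      have hM'v : ∀ x, M' *ᵥ x = M *ᵥ x + (c ⬝ᵥ (C *ᵥ x)) • b := by
        intro x
        rw [hM', add_mulVec]
        congr 1
        rw [← mulVec_mulVec, ← mulVec_mulVec, hK₀,
          sofAux_vecMulVec_mulVec, mulVec_smul, hb]
      have hcv1 : c ⬝ᵥ (C *ᵥ v) = 1 := by
        rw [hc, single_dotProduct, inv_mul_cancel₀ hj]
      -- kernel of M' is strictly smaller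
      have hkerle : LinearMap.ker M'.mulVecLin ≤ LinearMap.ker M.mulVecLin := by
        intro x hx
        have hx' : M *ᵥ x + (c ⬝ᵥ (C *ᵥ x)) • b = 0 := by
          rw [← hM'v]; exact hx
        have hscal : c ⬝ᵥ (C *ᵥ x) = 0 := by
          by_contra hs
          apply hu
          have h1 : M *ᵥ x = -((c ⬝ᵥ (C *ᵥ x)) • b) :=
            eq_neg_of_add_eq_zero_left hx'
          refine ⟨(-(c ⬝ᵥ (C *ᵥ x))⁻¹) • x, ?_⟩
          rw [mulVecLin_apply, mulVec_smul, h1, smul_neg, neg_smul, neg_neg,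
            smul_smul, inv_mul_cancel₀ hs, one_smul]
        have : M *ᵥ x = 0 := by
          rw [hscal, zero_smul, add_zero] at hx'
          exact hx'
        exact this
      have hklt : LinearMap.ker M'.mulVecLin < LinearMap.ker M.mulVecLin := by
        refine lt_of_le_of_ne hkerle ?_
        intro heq
        have hv' : v ∈ LinearMap.ker M'.mulVecLin := heq.symm ▸ hvmem
        have hbz : M' *ᵥ v = 0 := hv'
        rw [hM'v, hvker, hcv1, one_smul, zero_add] at hbz
        apply hu
        rw [hbz]
        exact Submodule.zero_mem _
      have hfinlt : Module.finrank ℂ (LinearMap.ker M'.mulVecLin)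
          < Module.finrank ℂ (LinearMap.ker M.mulVecLin) :=
        Submodule.finrank_lt_finrank_of_lt hklt
      -- conditions for M'
      have hcols' : LinearMap.range M'.mulVecLin ⊔ LinearMap.range B.mulVecLin = ⊤ := by
        rw [eq_top_iff, ← hcols]
        apply sup_le
        · rintro y ⟨x, rfl⟩
          rw [mulVecLin_apply, ← add_zero (M *ᵥ x),
            show (0 : Fin n → ℂ) = (c ⬝ᵥ (C *ᵥ x)) • b - (c ⬝ᵥ (C *ᵥ x)) • b by simp,
            ← add_sub_assoc, ← hM'v]
          refine Submodule.sub_mem _ (Submodule.mem_sup_left ⟨x, rfl⟩)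
            (Submodule.mem_sup_right ⟨(c ⬝ᵥ (C *ᵥ x)) • u, ?_⟩)
          rw [mulVecLin_apply, mulVec_smul, hb]
        · exact le_sup_right
      have hrows' : LinearMap.ker M'.mulVecLin ⊓ LinearMap.ker C.mulVecLin = ⊥ := by
        rw [eq_bot_iff, ← hrows]
        rintro x ⟨hx1, hx2⟩
        refine ⟨?_, hx2⟩
        have hCx : C *ᵥ x = 0 := hx2
        have hMx : M' *ᵥ x = 0 := hx1
        rw [hM'v, hCx, dotProduct_zero, zero_smul, add_zero] at hMx
        exact hMx
      obtain ⟨K', hK'⟩ := ih M' hcols' hrows' (by omega)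
      refine ⟨K₀ + K', ?_⟩
      have hre : M + B * (K₀ + K') * C = M' + B * K' * C := by
        rw [hM', Matrix.mul_add, Matrix.add_mul, ← add_assoc]
      rw [hre]
      exact hK'

end Aux

theorem exists_static_output_feedback_moving_spectrum (n m p : ℕ)
    (A : Matrix (Fin n) (Fin n) ℂ) (B : Matrix (Fin n) (Fin m) ℂ)
    (C : Matrix (Fin p) (Fin n) ℂ)
    (hc : Controllable A B) (ho : Observable A C) :
    ∃ K : Matrix (Fin m) (Fin p) ℂ,
      spectrum ℂ A ∩ spectrum ℂ (A + B * K * C) = ∅ := by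
  classical
  -- For each λ there is K with λ•1 - A - B*K*C invertible
  have key : ∀ lam : ℂ, ∃ K : Matrix (Fin m) (Fin p) ℂ,
      (lam • (1 : Matrix (Fin n) (Fin n) ℂ) - A - B * K * C).det ≠ 0 := by
    intro lam
    set M : Matrix (Fin n) (Fin n) ℂ := lam • (1 : Matrix (Fin n) (Fin n) ℂ) - A with hM
    have hcols := sofAux_range_sup M B (by simpa using hc lam)
    have hrows := sofAux_ker_inf M C (by simpa using ho lam)
    obtain ⟨K₁, hK₁⟩ := sofAux_main B C (Module.finrank ℂ (LinearMap.ker M.mulVecLin))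
      M hcols hrows le_rfl
    refine ⟨-K₁, ?_⟩
    have hre : M - B * (-K₁) * C = M + B * K₁ * C := by
      rw [Matrix.mul_neg, Matrix.neg_mul, sub_neg_eq_add]
    rw [hre]
    intro hdet
    obtain ⟨w, hw0, hw⟩ := (Matrix.exists_mulVec_eq_zero_iff).mpr hdet
    have hmem : w ∈ LinearMap.ker (M + B * K₁ * C).mulVecLin := hw
    rw [hK₁] at hmem
    exact hw0 hmem
  -- polynomial setup
  set XK : Matrix (Fin m) (Fin p) (MvPolynomial (Fin m × Fin p) ℂ) :=
    Matrix.of fun i j => MvPolynomial.X (i, j) with hXK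
  set Pol : ℂ → MvPolynomial (Fin m × Fin p) ℂ := fun lam =>
    ((lam • (1 : Matrix (Fin n) (Fin n) ℂ) - A).map MvPolynomial.C
      - (B.map MvPolynomial.C : Matrix (Fin n) (Fin m) (MvPolynomial (Fin m × Fin p) ℂ)) * XK
        * (C.map MvPolynomial.C : Matrix (Fin p) (Fin n) (MvPolynomial (Fin m × Fin p) ℂ))).det with hPolDef
  have heval : ∀ (lam : ℂ) (κ : Fin m × Fin p → ℂ),
      MvPolynomial.eval κ (Pol lam)
        = (lam • (1 : Matrix (Fin n) (Fin n) ℂ) - A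
            - B * (Matrix.of fun i j => κ (i, j)) * C).det := by
    intro lam κ
    simp only [hPolDef]
    rw [RingHom.map_det (MvPolynomial.eval κ)]
    congr 1
    have hmap : ∀ {a b : ℕ} (N : Matrix (Fin a) (Fin b) ℂ),
        (N.map MvPolynomial.C).map (MvPolynomial.eval κ) = N := by
      intro a b N
      ext i j
      simp [Matrix.map_apply]
    have hXKe : XK.map (MvPolynomial.eval κ) = Matrix.of (fun i j => κ (i, j)) := by
      ext i j
      simp [hXK, Matrix.map_apply]
    rw [RingHom.mapMatrix_apply, Matrix.map_sub _ (map_sub (MvPolynomial.eval κ)),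
      Matrix.map_mul, Matrix.map_mul, hmap, hmap, hmap, hXKe]
  have hPol : ∀ lam : ℂ, Pol lam ≠ 0 := by
    intro lam hP
    obtain ⟨K, hK⟩ := key lam
    apply hK
    have hev := heval lam (fun q => K q.1 q.2)
    rw [hP, map_zero] at hev
    rw [show (Matrix.of fun i j => K (i, j).1 (i, j).2) = K from rfl] at hev
    exact hev.symm
  -- finite spectrum
  have hfin : (spectrum ℂ A).Finite := Matrix.finite_spectrum A
  set S : Finset ℂ := hfin.toFinset with hS
  set Q : MvPolynomial (Fin m × Fin p) ℂ := ∏ lam ∈ S, Pol lam with hQdef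
  have hQ : Q ≠ 0 := Finset.prod_ne_zero_iff.mpr fun lam _ => hPol lam
  have hexκ : ∃ κ : Fin m × Fin p → ℂ, MvPolynomial.eval κ Q ≠ 0 := by
    by_contra hno
    push_neg at hno
    exact hQ (MvPolynomial.funext fun x => by rw [hno x, map_zero])
  obtain ⟨κ, hκ⟩ := hexκ
  refine ⟨Matrix.of fun i j => κ (i, j), ?_⟩
  rw [Set.eq_empty_iff_forall_notMem]
  rintro lam ⟨hlA, hlK⟩
  have hlamS : lam ∈ S := by rw [hS]; exact hfin.mem_toFinset.mpr hlA
  have hfactor : MvPolynomial.eval κ (Pol lam) ≠ 0 := by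
    intro h0
    apply hκ
    rw [hQdef, map_prod]
    exact Finset.prod_eq_zero hlamS h0
  rw [heval] at hfactor
  apply spectrum.mem_iff.mp hlK
  rw [Algebra.algebraMap_eq_smul_one, sub_add_eq_sub_sub]
  exact (Matrix.isUnit_iff_isUnit_det _).mpr (isUnit_iff_ne_zero.mpr hfactor)
end

section
/- Let A ∈ ℂ^{n×n}, B ∈ ℂ^{n×m}, C ∈ ℂ^{p×n}. If there exists K ∈ ℂ^{m×p} such that spectrum(A) ∩ spectrum(A + BKC) = ∅, then the pair (A,B) is controllable and the pair (A,C) is observable. -/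
open Matrix

/-- If a matrix with `n` columns has rank less than `n`, it has a nonzero kernel vector. -/
lemma exists_ker_of_rank_lt {k n : Type*} [Fintype k] [Fintype n] [DecidableEq n]
    (M : Matrix k n ℂ) (hM : M.rank ≠ Fintype.card n) :
    ∃ v : n → ℂ, v ≠ 0 ∧ M *ᵥ v = 0 := by
  have hrn := LinearMap.finrank_range_add_finrank_ker M.mulVecLin
  rw [Module.finrank_pi] at hrn
  have hker : LinearMap.ker M.mulVecLin ≠ ⊥ := by
    intro hbot
    rw [hbot] at hrn
    simp at hrn
    exact hM hrn
  obtain ⟨v, hv, hv0⟩ := Submodule.exists_mem_ne_zero_of_ne_bot hker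
  exact ⟨v, hv0, hv⟩

lemma not_isUnit_of_mulVec_eq_zero {n : Type*} [Fintype n] [DecidableEq n]
    (M : Matrix n n ℂ) (v : n → ℂ) (hv : v ≠ 0) (h : M *ᵥ v = 0) : ¬ IsUnit M := by
  intro hu
  have hdet : M.det = 0 := (Matrix.exists_mulVec_eq_zero_iff).mp ⟨v, hv, h⟩
  rw [Matrix.isUnit_iff_isUnit_det, hdet] at hu
  exact hu.ne_zero rfl

lemma not_isUnit_of_vecMul_eq_zero {n : Type*} [Fintype n] [DecidableEq n]
    (M : Matrix n n ℂ) (v : n → ℂ) (hv : v ≠ 0) (h : v ᵥ* M = 0) : ¬ IsUnit M := by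
  intro hu
  have hM : Mᵀ *ᵥ v = 0 := by rw [Matrix.mulVec_transpose, h]
  have hdet : Mᵀ.det = 0 := (Matrix.exists_mulVec_eq_zero_iff).mp ⟨v, hv, hM⟩
  rw [Matrix.det_transpose] at hdet
  rw [Matrix.isUnit_iff_isUnit_det, hdet] at hu
  exact hu.ne_zero rfl

lemma mem_spectrum_of_vecMul {n : Type*} [Fintype n] [DecidableEq n]
    (M : Matrix n n ℂ) (lam : ℂ) (v : n → ℂ) (hv : v ≠ 0)
    (h : v ᵥ* (lam • (1 : Matrix n n ℂ) - M) = 0) : lam ∈ spectrum ℂ M := by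
  rw [spectrum.mem_iff]
  have halg : algebraMap ℂ (Matrix n n ℂ) lam = lam • (1 : Matrix n n ℂ) := by
    rw [Algebra.algebraMap_eq_smul_one]
  rw [halg]
  exact not_isUnit_of_vecMul_eq_zero _ v hv h

lemma mem_spectrum_of_mulVec {n : Type*} [Fintype n] [DecidableEq n]
    (M : Matrix n n ℂ) (lam : ℂ) (v : n → ℂ) (hv : v ≠ 0)
    (h : (lam • (1 : Matrix n n ℂ) - M) *ᵥ v = 0) : lam ∈ spectrum ℂ M := by
  rw [spectrum.mem_iff]
  have halg : algebraMap ℂ (Matrix n n ℂ) lam = lam • (1 : Matrix n n ℂ) := by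
    rw [Algebra.algebraMap_eq_smul_one]
  rw [halg]
  exact not_isUnit_of_mulVec_eq_zero _ v hv h

theorem minimal_of_static_output_feedback (n m p : ℕ)
    (A : Matrix (Fin n) (Fin n) ℂ) (B : Matrix (Fin n) (Fin m) ℂ)
    (C : Matrix (Fin p) (Fin n) ℂ)
    (h : ∃ K : Matrix (Fin m) (Fin p) ℂ,
      spectrum ℂ A ∩ spectrum ℂ (A + B * K * C) = ∅) :
    Controllable A B ∧ Observable A C := by
  obtain ⟨K, hK⟩ := h
  constructor
  · intro lam
    by_contra hr
    set X := lam • (1 : Matrix (Fin n) (Fin n) ℂ) - A with hX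
    -- transpose of [X, B] is fromRows Xᵀ Bᵀ with n columns
    have hrt : (Matrix.fromRows Xᵀ Bᵀ).rank ≠ Fintype.card (Fin n) := by
      rw [← Matrix.transpose_fromCols, Matrix.rank_transpose]
      exact hr
    obtain ⟨v, hv0, hv⟩ := exists_ker_of_rank_lt _ hrt
    rw [Matrix.fromRows_mulVec] at hv
    have hX0 : v ᵥ* X = 0 := by
      rw [← Matrix.mulVec_transpose]
      funext i; exact congrFun hv (Sum.inl i)
    have hB0 : v ᵥ* B = 0 := by
      rw [← Matrix.mulVec_transpose]
      funext i; exact congrFun hv (Sum.inr i)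
    have h1 : lam ∈ spectrum ℂ A := mem_spectrum_of_vecMul A lam v hv0 hX0
    have h2 : lam ∈ spectrum ℂ (A + B * K * C) := by
      apply mem_spectrum_of_vecMul _ lam v hv0
      have : lam • (1 : Matrix (Fin n) (Fin n) ℂ) - (A + B * K * C)
          = X - B * (K * C) := by rw [hX, Matrix.mul_assoc, sub_add_eq_sub_sub]
      rw [this, Matrix.vecMul_sub, hX0, ← Matrix.vecMul_vecMul, hB0,
        Matrix.zero_vecMul, sub_zero]
    have : lam ∈ spectrum ℂ A ∩ spectrum ℂ (A + B * K * C) := ⟨h1, h2⟩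
    rw [hK] at this
    exact this
  · intro lam
    by_contra hr
    set X := lam • (1 : Matrix (Fin n) (Fin n) ℂ) - A with hX
    obtain ⟨v, hv0, hv⟩ := exists_ker_of_rank_lt _ hr
    rw [Matrix.fromRows_mulVec] at hv
    have hX0 : X *ᵥ v = 0 := by
      funext i; exact congrFun hv (Sum.inl i)
    have hC0 : C *ᵥ v = 0 := by
      funext i; exact congrFun hv (Sum.inr i)
    have h1 : lam ∈ spectrum ℂ A := mem_spectrum_of_mulVec A lam v hv0 hX0
    have h2 : lam ∈ spectrum ℂ (A + B * K * C) := by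
      apply mem_spectrum_of_mulVec _ lam v hv0
      have : lam • (1 : Matrix (Fin n) (Fin n) ℂ) - (A + B * K * C)
          = X - (B * K) * C := by rw [hX, sub_add_eq_sub_sub]
      rw [this, Matrix.sub_mulVec, hX0, ← Matrix.mulVec_mulVec, hC0,
        Matrix.mulVec_zero, sub_zero]
    have : lam ∈ spectrum ℂ A ∩ spectrum ℂ (A + B * K * C) := ⟨h1, h2⟩
    rw [hK] at this
    exact this
end

section
/- Let L = [[A,B],[C,D]] be an (n+m)×(n+m) complex block matrix with A ∈ ℂ^{n×n}, and let ψ be a complex polynomial with block decomposition ψ(L) = [[Ã,B̃],[C̃,D̃]] (same block sizes). If the pair (A,C) is not observable, then the pair (Ã,C̃) is not observable; similarly if (A,B) is not controllable then (Ã,B̃) is not controllable. -/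
open Matrix

-- rank = card iff kernel trivial
lemma rank_eq_card_iff_forall {k n : Type*} [Fintype k] [Fintype n]
    (M : Matrix k n ℂ) :
    M.rank = Fintype.card n ↔ ∀ v : n → ℂ, M *ᵥ v = 0 → v = 0 := by
  have hrn : M.rank + Module.finrank ℂ (LinearMap.ker M.mulVecLin) = Fintype.card n := by
    rw [Matrix.rank]
    simpa [Module.finrank_pi] using LinearMap.finrank_range_add_finrank_ker M.mulVecLin
  constructor
  · intro h v hv
    have hker : LinearMap.ker M.mulVecLin = ⊥ := by
      rw [← Submodule.finrank_eq_zero (R := ℂ)]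
      omega
    have : v ∈ LinearMap.ker M.mulVecLin := by
      simpa [Matrix.mulVecLin_apply] using hv
    simpa [hker] using this
  · intro h
    have hker : LinearMap.ker M.mulVecLin = ⊥ := by
      rw [LinearMap.ker_eq_bot']
      intro v hv
      exact h v (by simpa [Matrix.mulVecLin_apply] using hv)
    rw [hker, finrank_bot] at hrn
    omega

lemma aeval_mulVec {k : Type*} [Fintype k] [DecidableEq k]
    (M : Matrix k k ℂ) (v : k → ℂ) (lam : ℂ) (h : M *ᵥ v = lam • v)
    (p : Polynomial ℂ) :
    (Polynomial.aeval M p) *ᵥ v = p.eval lam • v := by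
  induction p using Polynomial.induction_on with
  | C a => simp [Polynomial.aeval_C, Algebra.algebraMap_eq_smul_one, Matrix.smul_mulVec]
  | add p q hp hq => simp [map_add, Matrix.add_mulVec, hp, hq, add_smul]
  | monomial i a hi =>
      have : (Polynomial.C a * Polynomial.X ^ (i + 1)) =
          (Polynomial.C a * Polynomial.X ^ i) * Polynomial.X := by ring
      rw [this, _root_.map_mul, Polynomial.aeval_X, ← Matrix.mulVec_mulVec, h,
        Matrix.mulVec_smul, hi, smul_smul]
      congr 1
      conv_rhs => rw [Polynomial.eval_mul, Polynomial.eval_X]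
      ring

lemma aeval_vecMul {k : Type*} [Fintype k] [DecidableEq k]
    (M : Matrix k k ℂ) (v : k → ℂ) (lam : ℂ) (h : v ᵥ* M = lam • v)
    (p : Polynomial ℂ) :
    v ᵥ* (Polynomial.aeval M p) = p.eval lam • v := by
  induction p using Polynomial.induction_on with
  | C a =>
      ext i
      simp [Polynomial.aeval_C, Algebra.algebraMap_eq_smul_one, Matrix.vecMul, dotProduct,
        Matrix.one_apply, mul_comm]
  | add p q hp hq => simp [map_add, Matrix.vecMul_add, hp, hq, add_smul]
  | monomial i a hi =>
      have : (Polynomial.C a * Polynomial.X ^ (i + 1)) =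
          Polynomial.X * (Polynomial.C a * Polynomial.X ^ i) := by ring
      rw [this, _root_.map_mul, Polynomial.aeval_X, ← Matrix.vecMul_vecMul, h,
        Matrix.smul_vecMul, hi, smul_smul]
      congr 1
      conv_rhs => rw [Polynomial.eval_mul, Polynomial.eval_X]

lemma fromRows_mulVec_eq_zero {k p n : Type*} [Fintype n]
    (M : Matrix k n ℂ) (N : Matrix p n ℂ) (v : n → ℂ) :
    Matrix.fromRows M N *ᵥ v = 0 ↔ M *ᵥ v = 0 ∧ N *ᵥ v = 0 := by
  rw [Matrix.fromRows_mulVec]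
  constructor
  · intro h
    constructor
    · ext i; exact congrFun h (Sum.inl i)
    · ext i; exact congrFun h (Sum.inr i)
  · rintro ⟨h1, h2⟩
    ext (i | i)
    · exact congrFun h1 i
    · exact congrFun h2 i

lemma pencil_mulVec {k : Type*} [Fintype k] [DecidableEq k]
    (A : Matrix k k ℂ) (lam : ℂ) (v : k → ℂ) :
    (lam • (1 : Matrix k k ℂ) - A) *ᵥ v = 0 ↔ A *ᵥ v = lam • v := by
  rw [Matrix.sub_mulVec, Matrix.smul_mulVec, Matrix.one_mulVec, sub_eq_zero, eq_comm]

lemma not_observable_iff {k p : Type*} [Fintype k] [Fintype p] [DecidableEq k]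
    (A : Matrix k k ℂ) (C : Matrix p k ℂ) :
    ¬ Observable A C ↔
      ∃ (lam : ℂ) (v : k → ℂ), v ≠ 0 ∧ A *ᵥ v = lam • v ∧ C *ᵥ v = 0 := by
  unfold Observable
  push_neg
  constructor
  · rintro ⟨lam, hlam⟩
    rw [Ne, rank_eq_card_iff_forall] at hlam
    push_neg at hlam
    obtain ⟨v, hv0, hvne⟩ := hlam
    rw [fromRows_mulVec_eq_zero, pencil_mulVec] at hv0
    exact ⟨lam, v, hvne, hv0.1, hv0.2⟩
  · rintro ⟨lam, v, hvne, h1, h2⟩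
    refine ⟨lam, ?_⟩
    rw [Ne, rank_eq_card_iff_forall]
    push_neg
    refine ⟨v, ?_, hvne⟩
    rw [fromRows_mulVec_eq_zero, pencil_mulVec]
    exact ⟨h1, h2⟩

lemma not_controllable_iff {k p : Type*} [Fintype k] [Fintype p] [DecidableEq k]
    (A : Matrix k k ℂ) (B : Matrix k p ℂ) :
    ¬ Controllable A B ↔
      ∃ (lam : ℂ) (w : k → ℂ), w ≠ 0 ∧ w ᵥ* A = lam • w ∧ w ᵥ* B = 0 := by
  unfold Controllable
  have key : ∀ lam : ℂ, (Matrix.fromCols (lam • (1 : Matrix k k ℂ) - A) B).rank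
      = (Matrix.fromRows (lam • (1 : Matrix k k ℂ) - Aᵀ) Bᵀ).rank := by
    intro lam
    rw [← Matrix.rank_transpose (Matrix.fromCols _ _), Matrix.transpose_fromCols,
      Matrix.transpose_sub, Matrix.transpose_smul, Matrix.transpose_one]
  push_neg
  constructor
  · rintro ⟨lam, hlam⟩
    rw [key, Ne, rank_eq_card_iff_forall] at hlam
    push_neg at hlam
    obtain ⟨w, hw0, hwne⟩ := hlam
    rw [fromRows_mulVec_eq_zero, pencil_mulVec] at hw0
    refine ⟨lam, w, hwne, ?_, ?_⟩
    · rw [← Matrix.mulVec_transpose]; exact hw0.1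
    · rw [← Matrix.mulVec_transpose]; exact hw0.2
  · rintro ⟨lam, w, hwne, h1, h2⟩
    refine ⟨lam, ?_⟩
    rw [key, Ne, rank_eq_card_iff_forall]
    push_neg
    refine ⟨w, ?_, hwne⟩
    rw [fromRows_mulVec_eq_zero, pencil_mulVec, Matrix.mulVec_transpose,
      Matrix.mulVec_transpose]
    exact ⟨h1, h2⟩

lemma elim_smul {k p : Type*} (lam : ℂ) (v : k → ℂ) :
    Sum.elim (lam • v) (0 : p → ℂ) = lam • Sum.elim v 0 := by
  ext (i | i) <;> simp

lemma elim_ne_zero {k p : Type*} {v : k → ℂ} (hv : v ≠ 0) :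
    Sum.elim v (0 : p → ℂ) ≠ 0 := by
  intro h
  apply hv
  ext i
  exact congrFun h (Sum.inl i)

theorem not_minimal_poly (n m : ℕ)
    (A : Matrix (Fin n) (Fin n) ℂ) (B : Matrix (Fin n) (Fin m) ℂ)
    (C : Matrix (Fin m) (Fin n) ℂ) (D : Matrix (Fin m) (Fin m) ℂ)
    (ψ : Polynomial ℂ) :
    (¬ Observable A C →
      ¬ Observable ((Polynomial.aeval (Matrix.fromBlocks A B C D) ψ).toBlocks₁₁)
        ((Polynomial.aeval (Matrix.fromBlocks A B C D) ψ).toBlocks₂₁)) ∧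
    (¬ Controllable A B →
      ¬ Controllable ((Polynomial.aeval (Matrix.fromBlocks A B C D) ψ).toBlocks₁₁)
        ((Polynomial.aeval (Matrix.fromBlocks A B C D) ψ).toBlocks₁₂)) := by
  set L := Matrix.fromBlocks A B C D with hL
  set P := Polynomial.aeval L ψ with hP
  have hPblocks : P = Matrix.fromBlocks P.toBlocks₁₁ P.toBlocks₁₂ P.toBlocks₂₁ P.toBlocks₂₂ :=
    (Matrix.fromBlocks_toBlocks P).symm
  constructor
  · rw [not_observable_iff, not_observable_iff]
    rintro ⟨lam, v, hvne, h1, h2⟩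
    refine ⟨ψ.eval lam, v, hvne, ?_, ?_⟩ <;>
    · have hLw : L *ᵥ Sum.elim v (0 : Fin m → ℂ) = lam • Sum.elim v 0 := by
        rw [hL, Matrix.fromBlocks_mulVec, ← elim_smul]
        simp [h1, h2]
      have := aeval_mulVec L (Sum.elim v 0) lam hLw ψ
      rw [← hP, hPblocks, Matrix.fromBlocks_mulVec, ← elim_smul] at this
      first
      | · have h' := fun i => congrFun this (Sum.inl i)
          ext i
          simpa [Sum.elim_comp_inl, Sum.elim_comp_inr] using h' i
      | · have h' := fun i => congrFun this (Sum.inr i)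
          ext i
          simpa [Sum.elim_comp_inl, Sum.elim_comp_inr] using h' i
  · rw [not_controllable_iff, not_controllable_iff]
    rintro ⟨lam, w, hwne, h1, h2⟩
    refine ⟨ψ.eval lam, w, hwne, ?_, ?_⟩ <;>
    · have hLw : Sum.elim w (0 : Fin m → ℂ) ᵥ* L = lam • Sum.elim w 0 := by
        rw [hL, Matrix.vecMul_fromBlocks, ← elim_smul]
        simp [h1, h2]
      have := aeval_vecMul L (Sum.elim w 0) lam hLw ψ
      rw [← hP, hPblocks, Matrix.vecMul_fromBlocks, ← elim_smul] at this
      first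
      | · have h' := fun i => congrFun this (Sum.inl i)
          ext i
          simpa [Sum.elim_comp_inl, Sum.elim_comp_inr] using h' i
      | · have h' := fun i => congrFun this (Sum.inr i)
          ext i
          simpa [Sum.elim_comp_inl, Sum.elim_comp_inr] using h' i
end

section
/- Let A ∈ ℂ^{n×n} with largest geometric multiplicity α among its eigenvalues. Then there exists B ∈ ℂ^{n×α} such that the pair (A,B) is controllable. Consequently the minimal possible rank (and minimal column number) of a B making (A,B) controllable equals α. -/
open Matrix
open Submodule Module

-- range of fromColumns is sup of ranges
lemma range_fromColumns_mulVecLin {n n₁ n₂ : Type*} [Fintype n] [Fintype n₁] [Fintype n₂]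
    (A₁ : Matrix n n₁ ℂ) (A₂ : Matrix n n₂ ℂ) :
    LinearMap.range (Matrix.fromCols A₁ A₂).mulVecLin =
      LinearMap.range A₁.mulVecLin ⊔ LinearMap.range A₂.mulVecLin := by
  apply le_antisymm
  · rintro x ⟨v, rfl⟩
    have : v = Sum.elim (v ∘ Sum.inl) (v ∘ Sum.inr) := by ext (i | i) <;> rfl
    rw [Matrix.mulVecLin_apply, this, Matrix.fromCols_mulVec_sumElim]
    exact Submodule.add_mem_sup ⟨v ∘ Sum.inl, rfl⟩ ⟨v ∘ Sum.inr, rfl⟩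
  · apply sup_le
    · rintro x ⟨v, rfl⟩
      refine ⟨Sum.elim v 0, ?_⟩
      simp [Matrix.mulVecLin_apply]
    · rintro x ⟨v, rfl⟩
      refine ⟨Sum.elim 0 v, ?_⟩
      simp [Matrix.mulVecLin_apply]

lemma exists_complementing_vectors (n : ℕ) (k : ℕ) (ι : Type) [Finite ι]
    (R : ι → Submodule ℂ (Fin n → ℂ)) (h : ∀ i, n - Module.finrank ℂ (R i) ≤ k) :
    ∃ v : Fin k → (Fin n → ℂ), ∀ i, Submodule.span ℂ (Set.range v) ⊔ R i = ⊤ := by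
  induction k generalizing R with
  | zero =>
    refine ⟨fun j => 0, fun i => ?_⟩
    have h1 : Module.finrank ℂ (R i) ≤ n := by
      simpa using Submodule.finrank_le (R i)
    have h2 : Module.finrank ℂ (R i) = n := by have := h i; omega
    have : R i = ⊤ := Submodule.eq_top_of_finrank_eq (by simpa using h2)
    simp [this]
  | succ k ih =>
    -- find v₀ outside all proper R i
    have hne : ⋃ (i : {i : ι // R i ≠ ⊤}), ((R i.1 : Submodule ℂ (Fin n → ℂ)) : Set (Fin n → ℂ))
        ≠ Set.univ := by
      intro hcov
      obtain ⟨i, hi⟩ := Subspace.exists_eq_top_of_iUnion_eq_univ hcov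
      exact i.2 hi
    obtain ⟨v₀, hv₀⟩ := Set.ne_univ_iff_exists_notMem _ |>.mp hne
    simp only [Set.mem_iUnion, not_exists, SetLike.mem_coe] at hv₀
    have hv₀' : ∀ i, R i ≠ ⊤ → v₀ ∉ R i := fun i hi => hv₀ ⟨i, hi⟩
    set R' : ι → Submodule ℂ (Fin n → ℂ) := fun i => R i ⊔ Submodule.span ℂ {v₀} with hR'
    have hcod : ∀ i, n - Module.finrank ℂ (R' i) ≤ k := by
      intro i
      by_cases hi : R i = ⊤
      · have : R' i = ⊤ := by simp [hR', hi]
        rw [this, finrank_top]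
        simp
      · have hlt : R i < R' i := by
          refine lt_of_le_of_ne le_sup_left ?_
          intro he
          exact hv₀' i hi (he ▸ Submodule.mem_sup_right (Submodule.mem_span_singleton_self v₀))
        have := Submodule.finrank_lt_finrank_of_lt hlt
        have := h i
        omega
    obtain ⟨v, hv⟩ := ih R' hcod
    refine ⟨Fin.cons v₀ v, fun i => ?_⟩
    rw [Fin.range_cons, Submodule.span_insert]
    have h2 := hv i
    rw [hR'] at h2
    simp only at h2
    rw [← h2]
    ac_rfl

theorem minimal_rank_controllable_eq_alpha (n : ℕ)
    (A : Matrix (Fin n) (Fin n) ℂ) (α : ℕ)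
    (hub : ∀ μ ∈ spectrum ℂ A, n - (μ • (1 : Matrix (Fin n) (Fin n) ℂ) - A).rank ≤ α)
    (hmax : ∃ μ ∈ spectrum ℂ A, n - (μ • (1 : Matrix (Fin n) (Fin n) ℂ) - A).rank = α) :
    (∃ B : Matrix (Fin n) (Fin α) ℂ, Controllable A B) ∧
      (∀ (m : ℕ) (B : Matrix (Fin n) (Fin m) ℂ), Controllable A B → α ≤ B.rank) := by
  constructor
  · -- existence
    set R : spectrum ℂ A → Submodule ℂ (Fin n → ℂ) :=
      fun μ => LinearMap.range ((μ.1 • (1 : Matrix (Fin n) (Fin n) ℂ) - A).mulVecLin) with hR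
    have hcod : ∀ μ : spectrum ℂ A, n - Module.finrank ℂ (R μ) ≤ α := fun μ => hub μ.1 μ.2
    obtain ⟨v, hv⟩ := exists_complementing_vectors n α _ R hcod
    refine ⟨(Matrix.of v)ᵀ, fun lam => ?_⟩
    by_cases hl : lam ∈ spectrum ℂ A
    · have hrange : LinearMap.range
          ((Matrix.fromCols (lam • (1 : Matrix (Fin n) (Fin n) ℂ) - A)
            ((Matrix.of v)ᵀ)).mulVecLin) = ⊤ := by
        rw [range_fromColumns_mulVecLin]
        have hB : LinearMap.range ((Matrix.of v)ᵀ).mulVecLin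
            = Submodule.span ℂ (Set.range v) := by
          rw [Matrix.range_mulVecLin]
          rfl
        rw [hB, sup_comm]
        exact hv ⟨lam, hl⟩
      rw [Matrix.rank, hrange, finrank_top]
      simp
    · have hu : IsUnit (lam • (1 : Matrix (Fin n) (Fin n) ℂ) - A) := by
        have := spectrum.notMem_iff.mp hl
        rwa [Algebra.algebraMap_eq_smul_one] at this
      refine le_antisymm (Matrix.rank_le_card_height _) ?_
      calc Fintype.card (Fin n)
          = (lam • (1 : Matrix (Fin n) (Fin n) ℂ) - A).rank :=
            (Matrix.rank_of_isUnit _ hu).symm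
        _ ≤ _ := Submodule.finrank_mono
            (by rw [range_fromColumns_mulVecLin]; exact le_sup_left)
  · rintro m B hB
    obtain ⟨μ, hμ, hα⟩ := hmax
    have h1 := hB μ
    have h2 : (Matrix.fromCols (μ • (1 : Matrix (Fin n) (Fin n) ℂ) - A) B).rank
        ≤ (μ • (1 : Matrix (Fin n) (Fin n) ℂ) - A).rank + B.rank := by
      rw [Matrix.rank, range_fromColumns_mulVecLin]
      have := Submodule.finrank_sup_add_finrank_inf_eq
        (LinearMap.range ((μ • (1 : Matrix (Fin n) (Fin n) ℂ) - A).mulVecLin))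
        (LinearMap.range (B.mulVecLin))
      change _ ≤ Module.finrank ℂ _ + Module.finrank ℂ _
      omega
    have h3 : (μ • (1 : Matrix (Fin n) (Fin n) ℂ) - A).rank ≤ n := by
      simpa using Matrix.rank_le_card_height (μ • (1 : Matrix (Fin n) (Fin n) ℂ) - A)
    simp only [Fintype.card_fin] at h1
    omega
end

section
/- Let A ∈ ℂ^{n×n}, B ∈ ℂ^{n×m}, C ∈ ℂ^{p×n}, with (A,B) controllable and (A,C) observable, and let α = α(A) be the largest geometric multiplicity of an eigenvalue of A. Then there exist full rank matrices T_b ∈ ℂ^{m×α} and T_c ∈ ℂ^{α×p} such that (A, B T_b) is controllable and (A, T_c C) is observable. -/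
open Matrix

namespace FRC

open Module Submodule MvPolynomial

/-- Range of `fromCols` is the sup of the ranges. -/
lemma range_fromColumns {q k l : Type*} [Fintype q] [Fintype k] [Fintype l]
    (M : Matrix q k ℂ) (N : Matrix q l ℂ) :
    LinearMap.range (fromCols M N).mulVecLin =
      LinearMap.range M.mulVecLin ⊔ LinearMap.range N.mulVecLin := by
  apply le_antisymm
  · rintro x ⟨v, rfl⟩
    have hv : (fromCols M N).mulVecLin v = M *ᵥ (v ∘ Sum.inl) + N *ᵥ (v ∘ Sum.inr) := by
      conv_lhs => rw [Matrix.mulVecLin_apply, ← Sum.elim_comp_inl_inr v,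
        fromCols_mulVec_sumElim]
    rw [hv]
    exact add_mem (mem_sup_left ⟨v ∘ Sum.inl, rfl⟩) (mem_sup_right ⟨v ∘ Sum.inr, rfl⟩)
  · apply sup_le
    · rintro x ⟨v, rfl⟩
      exact ⟨Sum.elim v 0, by simp [Matrix.mulVecLin_apply, fromCols_mulVec_sumElim]⟩
    · rintro x ⟨v, rfl⟩
      exact ⟨Sum.elim 0 v, by simp [Matrix.mulVecLin_apply, fromCols_mulVec_sumElim]⟩

lemma rank_top_iff {n : ℕ} {k : Type*} [Fintype k] (M : Matrix (Fin n) k ℂ) :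
    M.rank = n ↔ LinearMap.range M.mulVecLin = ⊤ := by
  have hr : M.rank = finrank ℂ (LinearMap.range M.mulVecLin) := rfl
  constructor
  · intro h
    apply Submodule.eq_top_of_finrank_eq
    rw [← hr, h, Module.finrank_fin_fun]
  · intro h
    rw [hr, h, finrank_top, Module.finrank_fin_fun]

lemma exists_right_inv {n : ℕ} {k : Type*} [Fintype k] [DecidableEq k]
    (M : Matrix (Fin n) k ℂ) (h : M.rank = n) :
    ∃ J : Matrix k (Fin n) ℂ, M * J = 1 := by
  have hsurj : Function.Surjective M.mulVecLin :=
    LinearMap.range_eq_top.mp ((rank_top_iff M).mp h)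
  choose J hJ using fun j => hsurj (Pi.single j 1)
  refine ⟨Matrix.of fun i j => J j i, ?_⟩
  ext i j
  have := congrFun (hJ j) i
  rw [Matrix.mulVecLin_apply] at this
  simp only [Matrix.mul_apply, Matrix.of_apply, Matrix.one_apply, Pi.single_apply]
  simpa [Matrix.mulVec, dotProduct, Pi.single_apply] using this

lemma exists_span_sup {n : ℕ} (α : ℕ) :
    ∀ V W : Submodule ℂ (Fin n → ℂ), V ⊔ W = ⊤ → n ≤ finrank ℂ V + α →
      ∃ f : Fin α → (Fin n → ℂ), (∀ i, f i ∈ W) ∧ V ⊔ span ℂ (Set.range f) = ⊤ := by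
  induction α with
  | zero =>
    intro V W hsup hle
    have hfin : finrank ℂ V = finrank ℂ (Fin n → ℂ) := by
      have h1 := Submodule.finrank_le V
      rw [Module.finrank_fin_fun] at h1 ⊢
      omega
    have : V = ⊤ := Submodule.eq_top_of_finrank_eq hfin
    exact ⟨fun i => 0, fun i => i.elim0, by simp [this]⟩
  | succ α ih =>
    intro V W hsup hle
    by_cases hV : V = ⊤
    · exact ⟨fun _ => 0, fun _ => W.zero_mem, by simp [hV]⟩
    · have hW : ¬ W ≤ V := by
        intro h
        exact hV (top_le_iff.mp (hsup ▸ sup_le le_rfl h))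
      obtain ⟨w, hwW, hwV⟩ := SetLike.not_le_iff_exists.mp hW
      have hlt : V < V ⊔ span ℂ {w} := by
        refine lt_of_le_of_ne le_sup_left fun he => hwV ?_
        rw [he]
        exact mem_sup_right (subset_span rfl)
      have hfin : n ≤ finrank ℂ (V ⊔ span ℂ {w} : Submodule ℂ (Fin n → ℂ)) + α := by
        have := Submodule.finrank_lt_finrank_of_lt hlt
        omega
      have hsup' : (V ⊔ span ℂ {w}) ⊔ W = ⊤ := by
        have hsw : span ℂ {w} ⊔ W = W := sup_eq_right.mpr (span_le.mpr (by simpa using hwW))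
        rw [sup_assoc, hsw, hsup]
      obtain ⟨f, hfW, hftop⟩ := ih (V ⊔ span ℂ {w}) W hsup' hfin
      refine ⟨Fin.cons w f, fun i => Fin.cases hwW hfW i, ?_⟩
      rw [Fin.range_cons, Submodule.span_insert, ← sup_assoc, hftop]

lemma exists_witness {n m α : ℕ} (L : Matrix (Fin n) (Fin n) ℂ) (B : Matrix (Fin n) (Fin m) ℂ)
    (h : (fromCols L B).rank = n) (hd : n ≤ L.rank + α) :
    ∃ T₀ : Matrix (Fin m) (Fin α) ℂ, (fromCols L (B * T₀)).rank = n := by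
  have htop : LinearMap.range L.mulVecLin ⊔ LinearMap.range B.mulVecLin = ⊤ := by
    rw [← range_fromColumns]; exact (rank_top_iff _).mp h
  have hdL : n ≤ finrank ℂ (LinearMap.range L.mulVecLin) + α := hd
  obtain ⟨f, hfW, hftop⟩ := exists_span_sup α _ _ htop hdL
  choose u hu using hfW
  refine ⟨Matrix.of fun k i => u i k, ?_⟩
  rw [rank_top_iff, range_fromColumns, eq_top_iff, ← hftop]
  refine sup_le_sup le_rfl (span_le.mpr ?_)
  rintro x ⟨i, rfl⟩
  refine ⟨Pi.single i 1, ?_⟩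
  rw [Matrix.mulVecLin_apply, ← Matrix.mulVec_mulVec]
  have hcol : (Matrix.of fun k i => u i k) *ᵥ Pi.single i 1 = u i := by
    rw [Matrix.mulVec_single]
    ext k; simp
  rw [hcol]
  exact hu i

lemma rank_fromColumns_le {n : ℕ} {k l : Type*} [Fintype k] [Fintype l]
    (M : Matrix (Fin n) k ℂ) (N : Matrix (Fin n) l ℂ) :
    (fromCols M N).rank ≤ M.rank + N.rank := by
  have hr : (fromCols M N).rank =
      finrank ℂ (LinearMap.range M.mulVecLin ⊔ LinearMap.range N.mulVecLin : Submodule ℂ _) := by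
    rw [show (fromCols M N).rank = finrank ℂ (LinearMap.range (fromCols M N).mulVecLin)
      from rfl, range_fromColumns]
  rw [hr]
  have := Submodule.finrank_sup_add_finrank_inf_eq
    (LinearMap.range M.mulVecLin) (LinearMap.range N.mulVecLin)
  have hM : M.rank = finrank ℂ (LinearMap.range M.mulVecLin) := rfl
  have hN : N.rank = finrank ℂ (LinearMap.range N.mulVecLin) := rfl
  omega

lemma rank_left_le_fromColumns {n : ℕ} {k l : Type*} [Fintype k] [Fintype l] [DecidableEq k]
    (M : Matrix (Fin n) k ℂ) (N : Matrix (Fin n) l ℂ) :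
    M.rank ≤ (fromCols M N).rank := by
  have : fromCols M N * fromRows (1 : Matrix k k ℂ) (0 : Matrix l k ℂ) = M := by
    rw [fromCols_mul_fromRows]; simp
  calc M.rank = (fromCols M N * fromRows (1 : Matrix k k ℂ) (0 : Matrix l k ℂ) : Matrix (Fin n) k ℂ).rank := by rw [this]
    _ ≤ _ := Matrix.rank_mul_le_left _ _

/-- Key lemma: the controllable side. -/
lemma key {n m α : ℕ} (A : Matrix (Fin n) (Fin n) ℂ) (B : Matrix (Fin n) (Fin m) ℂ)
    (hub : ∀ μ ∈ spectrum ℂ A, n - (μ • (1 : Matrix (Fin n) (Fin n) ℂ) - A).rank ≤ α)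
    (hmax : ∃ μ ∈ spectrum ℂ A, n - (μ • (1 : Matrix (Fin n) (Fin n) ℂ) - A).rank = α)
    (hc : Controllable A B) :
    ∃ Tb : Matrix (Fin m) (Fin α) ℂ, Tb.rank = α ∧ Controllable A (B * Tb) := by
  classical
  set L : ℂ → Matrix (Fin n) (Fin n) ℂ := fun μ => μ • (1 : Matrix (Fin n) (Fin n) ℂ) - A with hL
  -- for each eigenvalue, a witness T₀ and a right inverse J
  have hwit : ∀ μ ∈ spectrum ℂ A, ∃ T₀ : Matrix (Fin m) (Fin α) ℂ,
      ∃ J : Matrix (Fin n ⊕ Fin α) (Fin n) ℂ, fromCols (L μ) (B * T₀) * J = 1 := by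
    intro μ hμ
    have hrL : (L μ).rank ≤ n := by
      simpa using (L μ).rank_le_card_height
    have hd : n ≤ (L μ).rank + α := by
      have h' : n - (L μ).rank ≤ α := hub μ hμ
      omega
    have hcμ : (fromCols (L μ) B).rank = n := by simpa using hc μ
    obtain ⟨T₀, hT₀⟩ := exists_witness (L μ) B hcμ hd
    obtain ⟨J, hJ⟩ := exists_right_inv _ hT₀
    exact ⟨T₀, J, hJ⟩
  choose! T₀ J hJ using hwit
  -- the polynomial associated with an eigenvalue
  set σ := Fin m × Fin α
  set Tpoly : Matrix (Fin m) (Fin α) (MvPolynomial σ ℂ) :=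
    Matrix.of fun k i => MvPolynomial.X (k, i) with hTpoly
  set p : ℂ → MvPolynomial σ ℂ := fun μ =>
    ((L μ).map MvPolynomial.C * ((J μ).toRows₁).map MvPolynomial.C +
      @HMul.hMul _ _ (Matrix (Fin n) (Fin n) (MvPolynomial σ ℂ)) Matrix.instHMulOfFintypeOfMulOfAddCommMonoid (@HMul.hMul _ _ (Matrix (Fin n) (Fin α) (MvPolynomial σ ℂ)) Matrix.instHMulOfFintypeOfMulOfAddCommMonoid (B.map MvPolynomial.C) Tpoly) (((J μ).toRows₂).map MvPolynomial.C)).det with hp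
  have hev : ∀ (μ : ℂ) (t : σ → ℂ), MvPolynomial.eval t (p μ) =
      (L μ * (J μ).toRows₁ + B * (Matrix.of fun k i => t (k, i)) * (J μ).toRows₂).det := by
    intro μ t
    simp only [hp]
    rw [RingHom.map_det]
    congr 1
    ext i j
    simp [RingHom.mapMatrix_apply, Matrix.map_apply, Matrix.add_apply, Matrix.mul_apply,
      map_sum, Finset.mul_sum, Finset.sum_mul, hTpoly]
  have hfactor : ∀ (μ : ℂ) (T : Matrix (Fin m) (Fin α) ℂ),
      L μ * (J μ).toRows₁ + B * T * (J μ).toRows₂ = fromCols (L μ) (B * T) * J μ := by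
    intro μ T
    conv_rhs => rw [← fromRows_toRows (J μ)]
    rw [fromCols_mul_fromRows, Matrix.mul_assoc]
  have hpne : ∀ μ ∈ spectrum ℂ A, p μ ≠ 0 := by
    intro μ hμ hzero
    have h1 := hev μ (fun ki => T₀ μ ki.1 ki.2)
    rw [hzero] at h1
    have hT : (Matrix.of fun k i => (fun ki : σ => T₀ μ ki.1 ki.2) (k, i)) = T₀ μ := by
      ext k i; rfl
    rw [hT, hfactor, hJ μ hμ] at h1
    simp at h1
  -- the product polynomial over the spectrum
  set S : Finset ℂ := (Matrix.finite_spectrum A).toFinset with hS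
  have hmemS : ∀ μ, μ ∈ S ↔ μ ∈ spectrum ℂ A := fun μ => Set.Finite.mem_toFinset _
  set P : MvPolynomial σ ℂ := ∏ μ ∈ S, p μ with hPdef
  have hPne : P ≠ 0 := by
    rw [hPdef]
    exact Finset.prod_ne_zero_iff.mpr fun μ hμ => hpne μ ((hmemS μ).mp hμ)
  have hpoint : ∃ t : σ → ℂ, MvPolynomial.eval t P ≠ 0 := by
    by_contra hcon
    push_neg at hcon
    exact hPne (MvPolynomial.funext fun t => by simpa using hcon t)
  obtain ⟨t, ht⟩ := hpoint
  set Tb : Matrix (Fin m) (Fin α) ℂ := Matrix.of fun k i => t (k, i) with hTb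
  have htμ : ∀ μ ∈ spectrum ℂ A, (fromCols (L μ) (B * Tb) * J μ).det ≠ 0 := by
    intro μ hμ
    have : MvPolynomial.eval t (p μ) ≠ 0 := by
      intro h0
      apply ht
      rw [hPdef, map_prod]
      exact Finset.prod_eq_zero ((hmemS μ).mpr hμ) h0
    rw [hev μ t] at this
    rwa [← hfactor]
  -- controllability of (A, B * Tb)
  have hctrl : Controllable A (B * Tb) := by
    intro lam
    rw [Fintype.card_fin]
    by_cases hlam : lam ∈ spectrum ℂ A
    · have hdet := htμ lam hlam
      have hunit : IsUnit (fromCols (L lam) (B * Tb) * J lam) :=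
        (Matrix.isUnit_iff_isUnit_det _).mpr (isUnit_iff_ne_zero.mpr hdet)
      have hrk : (fromCols (L lam) (B * Tb) * J lam).rank = n := by
        simpa using Matrix.rank_of_isUnit _ hunit
      refine le_antisymm (by simpa using (fromCols (L lam) (B * Tb)).rank_le_card_height) ?_
      calc n = (fromCols (L lam) (B * Tb) * J lam).rank := hrk.symm
        _ ≤ (fromCols (L lam) (B * Tb)).rank := Matrix.rank_mul_le_left _ _
    · have hunit : IsUnit (L lam) := by
        rw [hL]
        have := spectrum.notMem_iff.mp hlam
        rwa [Algebra.algebraMap_eq_smul_one] at this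
      have hrk : (L lam).rank = n := by simpa using Matrix.rank_of_isUnit _ hunit
      refine le_antisymm (by simpa using (fromCols (L lam) (B * Tb)).rank_le_card_height) ?_
      calc n = (L lam).rank := hrk.symm
        _ ≤ _ := rank_left_le_fromColumns _ _
  -- rank of Tb
  obtain ⟨μ', hμ', hα⟩ := hmax
  have hα' : n - (L μ').rank = α := hα
  have h1 : (fromCols (L μ') (B * Tb)).rank = n := by simpa using hctrl μ'
  have h2 : (fromCols (L μ') (B * Tb)).rank ≤ (L μ').rank + (B * Tb).rank :=
    rank_fromColumns_le _ _
  have h3 : (B * Tb).rank ≤ Tb.rank := Matrix.rank_mul_le_right _ _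
  have h4 : Tb.rank ≤ α := by simpa using Tb.rank_le_card_width
  have h5 : (L μ').rank ≤ n := by simpa using (L μ').rank_le_card_height
  exact ⟨Tb, by omega, hctrl⟩

lemma spectrum_transpose {n : ℕ} (A : Matrix (Fin n) (Fin n) ℂ) :
    spectrum ℂ Aᵀ = spectrum ℂ A := by
  ext μ
  rw [spectrum.mem_iff, spectrum.mem_iff, Algebra.algebraMap_eq_smul_one]
  have h : μ • (1 : Matrix (Fin n) (Fin n) ℂ) - Aᵀ = (μ • 1 - A)ᵀ := by
    rw [Matrix.transpose_sub, Matrix.transpose_smul, Matrix.transpose_one]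
  rw [h, Matrix.isUnit_iff_isUnit_det, Matrix.det_transpose, ← Matrix.isUnit_iff_isUnit_det]

lemma smul_one_sub_transpose {n : ℕ} (A : Matrix (Fin n) (Fin n) ℂ) (μ : ℂ) :
    μ • (1 : Matrix (Fin n) (Fin n) ℂ) - Aᵀ = (μ • 1 - A)ᵀ := by
  rw [Matrix.transpose_sub, Matrix.transpose_smul, Matrix.transpose_one]

end FRC

theorem exists_full_rank_compressions (n m p : ℕ)
    (A : Matrix (Fin n) (Fin n) ℂ) (B : Matrix (Fin n) (Fin m) ℂ)
    (C : Matrix (Fin p) (Fin n) ℂ) (α : ℕ)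
    (hub : ∀ μ ∈ spectrum ℂ A, n - (μ • (1 : Matrix (Fin n) (Fin n) ℂ) - A).rank ≤ α)
    (hmax : ∃ μ ∈ spectrum ℂ A, n - (μ • (1 : Matrix (Fin n) (Fin n) ℂ) - A).rank = α)
    (hc : Controllable A B) (ho : Observable A C) :
    ∃ (Tb : Matrix (Fin m) (Fin α) ℂ) (Tc : Matrix (Fin α) (Fin p) ℂ),
      Tb.rank = α ∧ Tc.rank = α ∧ Controllable A (B * Tb) ∧ Observable A (Tc * C) := by
  obtain ⟨Tb, hTb, hctrl⟩ := FRC.key A B hub hmax hc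
  -- observable side via transposition
  have hubT : ∀ μ ∈ spectrum ℂ Aᵀ,
      n - (μ • (1 : Matrix (Fin n) (Fin n) ℂ) - Aᵀ).rank ≤ α := by
    intro μ hμ
    rw [FRC.spectrum_transpose] at hμ
    rw [FRC.smul_one_sub_transpose, Matrix.rank_transpose]
    exact hub μ hμ
  have hmaxT : ∃ μ ∈ spectrum ℂ Aᵀ,
      n - (μ • (1 : Matrix (Fin n) (Fin n) ℂ) - Aᵀ).rank = α := by
    obtain ⟨μ, hμ, hα⟩ := hmax
    refine ⟨μ, by rwa [FRC.spectrum_transpose], ?_⟩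
    rw [FRC.smul_one_sub_transpose, Matrix.rank_transpose]
    exact hα
  have hcT : Controllable Aᵀ Cᵀ := by
    intro lam
    have h := ho lam
    rw [show fromCols (lam • (1 : Matrix (Fin n) (Fin n) ℂ) - Aᵀ) Cᵀ =
        (fromRows (lam • (1 : Matrix (Fin n) (Fin n) ℂ) - A) C)ᵀ by
      rw [Matrix.transpose_fromRows, FRC.smul_one_sub_transpose]]
    rw [Matrix.rank_transpose]
    exact h
  obtain ⟨T, hT, hctrlT⟩ := FRC.key Aᵀ Cᵀ hubT hmaxT hcT
  refine ⟨Tb, Tᵀ, hTb, by rw [Matrix.rank_transpose]; exact hT, hctrl, ?_⟩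
  intro lam
  have h := hctrlT lam
  rw [show fromRows (lam • (1 : Matrix (Fin n) (Fin n) ℂ) - A) (Tᵀ * C) =
      (fromCols (lam • (1 : Matrix (Fin n) (Fin n) ℂ) - Aᵀ) (Cᵀ * T))ᵀ by
    rw [Matrix.transpose_fromCols, Matrix.transpose_mul, Matrix.transpose_transpose,
      FRC.smul_one_sub_transpose, Matrix.transpose_transpose]]
  rw [Matrix.rank_transpose]
  exact h
end

section
/- Let L = [[A,B],[C,D]] ∈ ℂ^{(n+m)×(n+m)} be invertible, and write L^{-1} = [[A',B'],[C',D']] with the same block sizes. If the pair (A,C) is not observable, then the pair (A',C') is not observable. -/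
open Matrix

lemma rank_eq_iff_inj {k : Type*} [Fintype k] {n : ℕ} (M : Matrix k (Fin n) ℂ) :
    M.rank = n ↔ ∀ v, M *ᵥ v = 0 → v = 0 := by
  have h := LinearMap.finrank_range_add_finrank_ker M.mulVecLin
  rw [Matrix.rank]
  constructor
  · intro hr v hv
    have hn : Module.finrank ℂ (Fin n → ℂ) = n := by simp
    rw [hr, hn] at h
    have hker : Module.finrank ℂ (LinearMap.ker M.mulVecLin) = 0 := by omega
    have : LinearMap.ker M.mulVecLin = ⊥ := Submodule.finrank_eq_zero.mp hker
    have hv' : v ∈ LinearMap.ker M.mulVecLin := by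
      simpa [Matrix.mulVecLin_apply] using hv
    rw [this] at hv'
    simpa using hv'
  · intro hinj
    have : LinearMap.ker M.mulVecLin = ⊥ := by
      ext v
      simp only [LinearMap.mem_ker, Submodule.mem_bot, Matrix.mulVecLin_apply]
      exact ⟨hinj v, fun hv => by simp [hv]⟩
    rw [this] at h
    simpa using h

lemma not_obs_iff {n p : ℕ} (A : Matrix (Fin n) (Fin n) ℂ) (C : Matrix (Fin p) (Fin n) ℂ) :
    ¬ Observable A C ↔ ∃ lam : ℂ, ∃ v : Fin n → ℂ, v ≠ 0 ∧ A *ᵥ v = lam • v ∧ C *ᵥ v = 0 := by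
  unfold Observable
  push_neg
  constructor
  · rintro ⟨lam, hlam⟩
    rw [Fintype.card_fin] at hlam
    rw [Ne, rank_eq_iff_inj] at hlam
    push_neg at hlam
    obtain ⟨v, hv0, hvne⟩ := hlam
    refine ⟨lam, v, hvne, ?_, ?_⟩
    · have h1 : (lam • (1 : Matrix (Fin n) (Fin n) ℂ) - A) *ᵥ v = 0 := by
        funext i
        simpa [Matrix.fromRows_mulVec] using congrFun hv0 (Sum.inl i)
      rw [Matrix.sub_mulVec] at h1
      have h2 := (sub_eq_zero.mp h1).symm
      rw [h2]
      simp [Matrix.smul_mulVec]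
    · funext i
      simpa [Matrix.fromRows_mulVec] using congrFun hv0 (Sum.inr i)
  · rintro ⟨lam, v, hvne, hAv, hCv⟩
    refine ⟨lam, ?_⟩
    rw [Fintype.card_fin, Ne, rank_eq_iff_inj]
    push_neg
    refine ⟨v, ?_, hvne⟩
    funext i
    cases i with
    | inl i =>
      simp [Matrix.fromRows_mulVec, Matrix.sub_mulVec, hAv, Matrix.smul_mulVec]
    | inr i => simp [Matrix.fromRows_mulVec, hCv]

theorem not_observable_inverse (n m : ℕ)
    (A : Matrix (Fin n) (Fin n) ℂ) (B : Matrix (Fin n) (Fin m) ℂ)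
    (C : Matrix (Fin m) (Fin n) ℂ) (D : Matrix (Fin m) (Fin m) ℂ)
    (hL : IsUnit (Matrix.fromBlocks A B C D))
    (h : ¬ Observable A C) :
    ¬ Observable ((Matrix.fromBlocks A B C D)⁻¹.toBlocks₁₁)
      ((Matrix.fromBlocks A B C D)⁻¹.toBlocks₂₁) := by
  set L := Matrix.fromBlocks A B C D with hLdef
  rw [not_obs_iff] at h ⊢
  obtain ⟨lam, v, hvne, hAv, hCv⟩ := h
  set x : (Fin n ⊕ Fin m) → ℂ := Sum.elim v 0 with hxdef
  have hxne : x ≠ 0 := by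
    intro hx
    apply hvne
    funext i
    exact congrFun hx (Sum.inl i)
  have hdet : IsUnit L.det := (Matrix.isUnit_iff_isUnit_det L).mp hL
  have hLx : L *ᵥ x = lam • x := by
    rw [hxdef, Matrix.fromBlocks_mulVec]
    funext i
    cases i with
    | inl i => simp [hAv]
    | inr i => simp [hCv]
  have hlam0 : lam ≠ 0 := by
    intro h0
    rw [h0, zero_smul] at hLx
    have : x = 0 := by
      have h' : (L⁻¹ * L) *ᵥ x = L⁻¹ *ᵥ 0 := by rw [← Matrix.mulVec_mulVec, hLx]
      simpa [Matrix.nonsing_inv_mul L hdet] using h'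
    exact hxne this
  have hinv : L⁻¹ *ᵥ x = lam⁻¹ • x := by
    have h' : (L⁻¹ * L) *ᵥ x = L⁻¹ *ᵥ (lam • x) := by rw [← Matrix.mulVec_mulVec, hLx]
    rw [Matrix.nonsing_inv_mul L hdet, Matrix.one_mulVec, Matrix.mulVec_smul] at h'
    conv_rhs => rw [h']
    rw [smul_smul, inv_mul_cancel₀ hlam0, one_smul]
  have hblocks : L⁻¹ = Matrix.fromBlocks (L⁻¹.toBlocks₁₁) (L⁻¹.toBlocks₁₂)
      (L⁻¹.toBlocks₂₁) (L⁻¹.toBlocks₂₂) := (Matrix.fromBlocks_toBlocks _).symm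
  rw [hblocks, hxdef, Matrix.fromBlocks_mulVec] at hinv
  refine ⟨lam⁻¹, v, hvne, ?_, ?_⟩
  · funext i
    simpa using congrFun hinv (Sum.inl i)
  · funext i
    simpa using congrFun hinv (Sum.inr i)
end
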